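/- For an equivariant LR skew tableau L with B = L|_μ and Δ(a) = ω(L^u_{≤a})_{|a|} - c(a) + r(a): moving one box to the left along a row, Δ can decrease by at most one, and if it does decrease by one then the left entry must be barred. -/
import Mathlib


open scoped Classical
open MvPolynomial

noncomputable section

namespace EqLR

/-- Ambient polynomial ring `ℂ[x_1,…,x_d ; y_i (i ∈ ℤ)]`.
The variables `x_j` are indexed by `Fin d` (so `x_{j+1} = X (Sum.inl j)`), and the
variables `y_i` are indexed by `ℤ` (only positive indices actually occur). -/
abbrev P (d : ℕ) := MvPolynomial (Fin d ⊕ ℤ) ℂ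

/-- The variable `y_i`. -/
def yI (d : ℕ) (i : ℤ) : P d := X (Sum.inr i)

/-- The variable `x_v` for a value `v ∈ {1,…,d}` (junk value `0` otherwise). -/
def xv (d : ℕ) (v : ℕ) : P d :=
  if h : v - 1 < d then X (Sum.inl ⟨v - 1, h⟩) else 0

/-- The component `ξ_v` of a vector `ξ ∈ ℕ^d`, for a (1-based) value `v ∈ {1,…,d}`. -/
def vecAt {d : ℕ} (ξ : Fin d → ℕ) (v : ℕ) : ℕ :=
  if h : v - 1 < d then ξ ⟨v - 1, h⟩ else 0

/-- `μ ∈ ℕ^d` is a partition:  `μ_1 ≥ μ_2 ≥ … ≥ μ_d`. -/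
def IsPartitionVec {d : ℕ} (μ : Fin d → ℕ) : Prop :=
  ∀ i j : Fin d, i ≤ j → μ j ≤ μ i

/-- `|μ| = μ_1 + ⋯ + μ_d`. -/
def wt {d : ℕ} (μ : Fin d → ℕ) : ℕ := ∑ i, μ i

/-- `ρ = (d-1, d-2, …, 0)`. -/
def rho (d : ℕ) : Fin d → ℕ := fun i => d - 1 - (i : ℕ)

/-- Cells `(r, c)` (both 0-based) of the Young/reverse Young diagram whose row `r` has
length `μ_{r+1}`.  For the reverse diagram, rows are numbered bottom-to-top and columns
right-to-left; for the ordinary Young diagram, top-to-bottom and left-to-right. -/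
def cells (d : ℕ) (μ : Fin d → ℕ) : Finset (ℕ × ℕ) :=
  (Finset.range d ×ˢ Finset.range (Finset.univ.sup μ + 1)).filter
    fun rc => ∃ h : rc.1 < d, rc.2 < μ ⟨rc.1, h⟩

/-- In the column reading word of a *reverse* diagram (columns right-to-left, i.e. in
increasing 0-based column index, each column read top-to-bottom, i.e. in decreasing
0-based row index), the cell `b` is read strictly before the cell `a`. -/
def revBefore (a b : ℕ × ℕ) : Prop := b.2 < a.2 ∨ (b.2 = a.2 ∧ a.1 < b.1)

/-- In the column reading word of an ordinary Young diagram (rightmost column first,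
each column read top-to-bottom), the cell `b` is read strictly before the cell `a`. -/
def youngBefore (a b : ℕ × ℕ) : Prop := a.2 < b.2 ∨ (b.2 = a.2 ∧ b.1 < a.1)

/-- A reverse tableau of shape `μ`: entries in `{1,…,d}`, weakly increasing along rows
(left to right) and strictly increasing down columns (top to bottom). -/
structure RevTableau (d : ℕ) (μ : Fin d → ℕ) where
  val : ℕ × ℕ → ℕ
  mem : ∀ a ∈ cells d μ, 1 ≤ val a ∧ val a ≤ d
  zero : ∀ a ∉ cells d μ, val a = 0
  row : ∀ r c : ℕ, (r, c + 1) ∈ cells d μ → val (r, c + 1) ≤ val (r, c)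
  col : ∀ r c : ℕ, (r + 1, c) ∈ cells d μ → val (r + 1, c) < val (r, c)

/-- The factor `x_v - y_{(d+1-v) + c(a) - r(a)}` attached to an entry of value `v` in
the cell `a` of the reverse diagram (`c(a) = a.2 + 1`, `r(a) = a.1 + 1`, 1-based). -/
def factor (d : ℕ) (v : ℕ) (a : ℕ × ℕ) : P d :=
  xv d v - yI d ((d : ℤ) + 1 - (v : ℤ) + (a.2 : ℤ) - (a.1 : ℤ))

/-- The factorial Schur function `s_μ(x|y) = Σ_R (x|y)^R`. -/
def fSchur (d : ℕ) (μ : Fin d → ℕ) : P d :=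
  ∑ᶠ R : RevTableau d μ, ∏ a ∈ cells d μ, factor d (R.val a) a

/-- The ordinary Schur function `s_μ(x) = Σ_R x^R`. -/
def schurX (d : ℕ) (μ : Fin d → ℕ) : P d :=
  ∑ᶠ R : RevTableau d μ, ∏ a ∈ cells d μ, xv d (R.val a)

/-- The subalgebra `ℂ[y]` of polynomials in the `y` variables only. -/
def ySub (d : ℕ) : Subalgebra ℂ (P d) :=
  Algebra.adjoin ℂ (Set.range fun i : ℤ => yI d i)

/-- `p` is symmetric in the `x` variables. -/
def SymmX {d : ℕ} (p : P d) : Prop :=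
  ∀ σ : Equiv.Perm (Fin d), rename (⇑(Equiv.sumCongr σ (Equiv.refl ℤ))) p = p

/-- The falling factorial power `(x_j | y)^k = (x_j - y_1)⋯(x_j - y_k)`. -/
def ffPow (d : ℕ) (j : Fin d) (k : ℕ) : P d :=
  ∏ i ∈ Finset.range k, (X (Sum.inl j) - yI d ((i : ℤ) + 1))

/-- `(x|y)^ξ = (x_1|y)^{ξ_1} ⋯ (x_d|y)^{ξ_d}`. -/
def xyPow (d : ℕ) (ξ : Fin d → ℕ) : P d := ∏ j : Fin d, ffPow d j (ξ j)

/-- The alternant `a_ξ(x|y) = det[(x_j|y)^{ξ_i}]`. -/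
def aDet (d : ℕ) (ξ : Fin d → ℕ) : P d :=
  Matrix.det (Matrix.of fun i j : Fin d => ffPow d j (ξ i))

/-! ### Skew barred tableaux of shape `λ*μ` -/

/-- A skew barred tableau of shape `λ*μ`: the Young diagram `λ` (placed above and to
the right of the reverse diagram `μ`) is filled with values in `{1,…,d}` (field `top`),
the reverse diagram `μ` is filled with values in `{1,…,d}` (field `bot`), some of whose
cells may be barred (field `barred`); values weakly increase along rows left-to-right
and strictly increase down columns, ignoring bars. -/
structure SkewBarredTableau (d : ℕ) (lam mu : Fin d → ℕ) where
  top : ℕ × ℕ → ℕ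
  bot : ℕ × ℕ → ℕ
  barred : ℕ × ℕ → Prop
  top_mem : ∀ a ∈ cells d lam, 1 ≤ top a ∧ top a ≤ d
  top_zero : ∀ a ∉ cells d lam, top a = 0
  bot_mem : ∀ a ∈ cells d mu, 1 ≤ bot a ∧ bot a ≤ d
  bot_zero : ∀ a ∉ cells d mu, bot a = 0
  barred_sub : ∀ a, barred a → a ∈ cells d mu
  top_row : ∀ r c : ℕ, (r, c + 1) ∈ cells d lam → top (r, c) ≤ top (r, c + 1)
  top_col : ∀ r c : ℕ, (r + 1, c) ∈ cells d lam → top (r, c) < top (r + 1, c)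
  bot_row : ∀ r c : ℕ, (r, c + 1) ∈ cells d mu → bot (r, c + 1) ≤ bot (r, c)
  bot_col : ∀ r c : ℕ, (r + 1, c) ∈ cells d mu → bot (r + 1, c) < bot (r, c)

namespace SkewBarredTableau

variable {d : ℕ} {lam mu : Fin d → ℕ}

/-- `ω(L^u_{<a})_k`: the number of `k`'s among the unbarred entries of `L` read strictly
before the `μ`-cell `a` in the unbarred column word (all of `λ` is read before `μ`). -/
def countBefore (L : SkewBarredTableau d lam mu) (a : ℕ × ℕ) (k : ℕ) : ℕ :=
  ((cells d lam).filter fun b => L.top b = k).card +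
  ((cells d mu).filter fun b => ¬ L.barred b ∧ L.bot b = k ∧ revBefore a b).card

/-- `ω(L^u_{≤a})_k`: as `countBefore`, but the entry of `a` itself is also counted when
`a` is unbarred. -/
def countUpTo (L : SkewBarredTableau d lam mu) (a : ℕ × ℕ) (k : ℕ) : ℕ :=
  ((cells d lam).filter fun b => L.top b = k).card +
  ((cells d mu).filter fun b => ¬ L.barred b ∧ L.bot b = k ∧ (revBefore a b ∨ b = a)).card

/-- Prefix content within the `λ`-part of the word. -/
def topCountUpTo (L : SkewBarredTableau d lam mu) (a : ℕ × ℕ) (k : ℕ) : ℕ :=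
  ((cells d lam).filter fun b => L.top b = k ∧ (youngBefore a b ∨ b = a)).card

/-- `ω(L^u)_k`: total content of the unbarred column word of `L`. -/
def content (L : SkewBarredTableau d lam mu) (k : ℕ) : ℕ :=
  ((cells d lam).filter fun b => L.top b = k).card +
  ((cells d mu).filter fun b => ¬ L.barred b ∧ L.bot b = k).card

/-- The unbarred column word of `L` is Yamanouchi: every prefix contains at least as
many `k`'s as `(k+1)`'s, for every `k ≥ 1`. -/
def Yamanouchi (L : SkewBarredTableau d lam mu) : Prop :=
  (∀ a ∈ cells d lam, ∀ k : ℕ, 1 ≤ k → L.topCountUpTo a (k + 1) ≤ L.topCountUpTo a k) ∧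
  (∀ a ∈ cells d mu, ¬ L.barred a → ∀ k : ℕ, 1 ≤ k →
      L.countUpTo a (k + 1) ≤ L.countUpTo a k)

/-- `L` is an equivariant Littlewood–Richardson skew tableau of shape `λ*μ` and unbarred
content `ν`. -/
def IsLR (L : SkewBarredTableau d lam mu) (ν : Fin d → ℕ) : Prop :=
  L.Yamanouchi ∧ ∀ i : Fin d, L.content ((i : ℕ) + 1) = ν i

/-- The index `|a|' + ω(L^u_{<a})_{|a|}` of the first `y` in the factor of `c_L` at a
barred cell `a`. -/
def eIdx (L : SkewBarredTableau d lam mu) (a : ℕ × ℕ) : ℤ :=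
  ((d : ℤ) + 1 - (L.bot a : ℤ)) + (L.countBefore a (L.bot a) : ℤ)

/-- The index `|a|' + c(a) - r(a)` of the second `y` in the factor of `c_L` at a barred
cell `a`. -/
def fIdx (L : SkewBarredTableau d lam mu) (a : ℕ × ℕ) : ℤ :=
  ((d : ℤ) + 1 - (L.bot a : ℤ)) + (a.2 : ℤ) - (a.1 : ℤ)

/-- The weight `c_L = ∏_{a barred} (y_{|a|'+ω(L^u_{<a})_{|a|}} - y_{|a|'+c(a)-r(a)})`. -/
def cWt (L : SkewBarredTableau d lam mu) : P d :=
  ∏ a ∈ (cells d mu).filter (fun a => L.barred a), (yI d (L.eIdx a) - yI d (L.fIdx a))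

/-- `Δ(a) = ω(L^u_{≤a})_{|a|} - c(a) + r(a)`. -/
def Δ (L : SkewBarredTableau d lam mu) (a : ℕ × ℕ) : ℤ :=
  (L.countUpTo a (L.bot a) : ℤ) - ((a.2 : ℤ) + 1) + ((a.1 : ℤ) + 1)

end SkewBarredTableau

/-! ### Reverse barred tableaux -/

/-- A reverse barred tableau of shape `μ`. -/
structure RevBarredTableau (d : ℕ) (μ : Fin d → ℕ) where
  val : ℕ × ℕ → ℕ
  barred : ℕ × ℕ → Prop
  mem : ∀ a ∈ cells d μ, 1 ≤ val a ∧ val a ≤ d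
  zero : ∀ a ∉ cells d μ, val a = 0
  barred_sub : ∀ a, barred a → a ∈ cells d μ
  row : ∀ r c : ℕ, (r, c + 1) ∈ cells d μ → val (r, c + 1) ≤ val (r, c)
  col : ∀ r c : ℕ, (r + 1, c) ∈ cells d μ → val (r + 1, c) < val (r, c)

namespace RevBarredTableau

variable {d : ℕ} {μ : Fin d → ℕ}

/-- `ω(B^u_{<a})_k`. -/
def countBefore (B : RevBarredTableau d μ) (a : ℕ × ℕ) (k : ℕ) : ℕ :=
  ((cells d μ).filter fun b => ¬ B.barred b ∧ B.val b = k ∧ revBefore a b).card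

/-- `ω(B^u_{≤a})_k` (including `a` itself when unbarred). -/
def countUpTo (B : RevBarredTableau d μ) (a : ℕ × ℕ) (k : ℕ) : ℕ :=
  ((cells d μ).filter fun b => ¬ B.barred b ∧ B.val b = k ∧ (revBefore a b ∨ b = a)).card

/-- `ω(B^u)_k`. -/
def content (B : RevBarredTableau d μ) (k : ℕ) : ℕ :=
  ((cells d μ).filter fun b => ¬ B.barred b ∧ B.val b = k).card

/-- `e_{ξ,B}(a) = (ξ + ω(B^u_{<a}))_{|a|}`. -/
def eIdx (B : RevBarredTableau d μ) (ξ : Fin d → ℕ) (a : ℕ × ℕ) : ℤ :=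
  (vecAt ξ (B.val a) : ℤ) + (B.countBefore a (B.val a) : ℤ)

/-- `f_B(a) = |a|' + c(a) - r(a)`. -/
def fIdx (B : RevBarredTableau d μ) (a : ℕ × ℕ) : ℤ :=
  ((d : ℤ) + 1 - (B.val a : ℤ)) + (a.2 : ℤ) - (a.1 : ℤ)

/-- `c_{ξ,B} = ∏_{a barred} (y_{e_{ξ,B}(a)} - y_{f_B(a)})`. -/
def cXi (B : RevBarredTableau d μ) (ξ : Fin d → ℕ) : P d :=
  ∏ a ∈ (cells d μ).filter (fun a => B.barred a), (yI d (B.eIdx ξ a) - yI d (B.fIdx a))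

/-- The unbarred column word of `λ*B` is Yamanouchi (the `λ`-part is the canonical
filling of `λ`, whose whole content `λ` is added to every prefix of `B^u`). -/
def StarYam (B : RevBarredTableau d μ) (lam : Fin d → ℕ) : Prop :=
  ∀ a ∈ cells d μ, ¬ B.barred a → ∀ k : ℕ, 1 ≤ k →
    vecAt lam (k + 1) + B.countUpTo a (k + 1) ≤ vecAt lam k + B.countUpTo a k

end RevBarredTableau

/-! ### Reverse hatted tableaux -/

/-- A hat decoration: none, left hat, or right hat. -/
inductive Hat where
  | unhatted : Hat
  | left : Hat
  | right : Hat
deriving DecidableEq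

/-- A reverse hatted tableau of shape `μ`. -/
structure RevHattedTableau (d : ℕ) (μ : Fin d → ℕ) where
  val : ℕ × ℕ → ℕ
  hat : ℕ × ℕ → Hat
  mem : ∀ a ∈ cells d μ, 1 ≤ val a ∧ val a ≤ d
  zero : ∀ a ∉ cells d μ, val a = 0
  hat_out : ∀ a ∉ cells d μ, hat a = Hat.unhatted
  row : ∀ r c : ℕ, (r, c + 1) ∈ cells d μ → val (r, c + 1) ≤ val (r, c)
  col : ∀ r c : ℕ, (r + 1, c) ∈ cells d μ → val (r + 1, c) < val (r, c)

namespace RevHattedTableau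

variable {d : ℕ} {μ : Fin d → ℕ}

/-- `ω(H^u_{<a})_k`: content of the unhatted column word of `H` read before `a`. -/
def countBefore (H : RevHattedTableau d μ) (a : ℕ × ℕ) (k : ℕ) : ℕ :=
  ((cells d μ).filter fun b => H.hat b = Hat.unhatted ∧ H.val b = k ∧ revBefore a b).card

/-- `ω(H^u)_k`. -/
def content (H : RevHattedTableau d μ) (k : ℕ) : ℕ :=
  ((cells d μ).filter fun b => H.hat b = Hat.unhatted ∧ H.val b = k).card

/-- `e_{ξ,H}(a) = (ξ + ω(H^u_{<a}))_{|a|}`. -/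
def eIdx (H : RevHattedTableau d μ) (ξ : Fin d → ℕ) (a : ℕ × ℕ) : ℤ :=
  (vecAt ξ (H.val a) : ℤ) + (H.countBefore a (H.val a) : ℤ)

/-- `f_H(a) = |a|' + c(a) - r(a)`. -/
def fIdx (H : RevHattedTableau d μ) (a : ℕ × ℕ) : ℤ :=
  ((d : ℤ) + 1 - (H.val a : ℤ)) + (a.2 : ℤ) - (a.1 : ℤ)

/-- `d_{ξ,H} = ∏_{a ∈ H^l} y_{e_{ξ,H}(a)} · ∏_{a ∈ H^r} (-y_{f_H(a)})`. -/
def dWt (H : RevHattedTableau d μ) (ξ : Fin d → ℕ) : P d :=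
  (∏ a ∈ (cells d μ).filter (fun a => H.hat a = Hat.left), yI d (H.eIdx ξ a)) *
  ∏ a ∈ (cells d μ).filter (fun a => H.hat a = Hat.right), (-(yI d (H.fIdx a)))

end RevHattedTableau

/-- `H̄ = B`: `H` unbars to the reverse barred tableau `B`. -/
def UnbarsTo {d : ℕ} {μ : Fin d → ℕ} (H : RevHattedTableau d μ)
    (B : RevBarredTableau d μ) : Prop :=
  H.val = B.val ∧ ∀ a, (H.hat a ≠ Hat.unhatted ↔ B.barred a)

/-- The simple transposition `σ_i` on values: exchanges `i` and `i+1`. -/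
def swapVal (i v : ℕ) : ℕ := if v = i then i + 1 else if v = i + 1 then i else v

/-- The action of `σ_i` on `ℕ^d` by permuting coordinates. -/
def swapVec {d : ℕ} (i : ℕ) (ξ : Fin d → ℕ) : Fin d → ℕ :=
  fun j => vecAt ξ (swapVal i ((j : ℕ) + 1))

/-! ### Reverse (barred) subtableaux -/

/-- A reverse subtableau of shape `μ`: each cell is empty (value `0`) or carries a value
in `{1,…,d}`; no row or column conditions. -/
structure RevSubTableau (d : ℕ) (μ : Fin d → ℕ) where
  val : ℕ × ℕ → ℕ
  mem : ∀ a ∈ cells d μ, val a ≤ d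
  zero : ∀ a ∉ cells d μ, val a = 0

/-- A reverse barred subtableau of shape `μ`: a reverse subtableau some of whose filled
cells are barred. -/
structure RevBarredSubTableau (d : ℕ) (μ : Fin d → ℕ) where
  val : ℕ × ℕ → ℕ
  barred : ℕ × ℕ → Prop
  mem : ∀ a ∈ cells d μ, val a ≤ d
  zero : ∀ a ∉ cells d μ, val a = 0
  barred_filled : ∀ a, barred a → a ∈ cells d μ ∧ val a ≠ 0

/-- `(x|y)^R` for a reverse subtableau `R`. -/
def RevSubTableau.xyProd {d : ℕ} {μ : Fin d → ℕ} (R : RevSubTableau d μ) : P d :=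
  ∏ a ∈ (cells d μ).filter (fun a => R.val a ≠ 0), factor d (R.val a) a

namespace RevBarredSubTableau

variable {d : ℕ} {μ : Fin d → ℕ}

/-- `ω(B^u_{<a})_k`: unbarred filled entries of value `k` read before `a`. -/
def countBefore (B : RevBarredSubTableau d μ) (a : ℕ × ℕ) (k : ℕ) : ℕ :=
  ((cells d μ).filter fun b => ¬ B.barred b ∧ B.val b = k ∧ revBefore a b).card

/-- `ω(B^u)_k`. -/
def content (B : RevBarredSubTableau d μ) (k : ℕ) : ℕ :=
  ((cells d μ).filter fun b => ¬ B.barred b ∧ B.val b = k).card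

/-- `e_{ξ,B}(a) = (ξ + ω(B^u_{<a}))_{|a|}`. -/
def eIdx (B : RevBarredSubTableau d μ) (ξ : Fin d → ℕ) (a : ℕ × ℕ) : ℤ :=
  (vecAt ξ (B.val a) : ℤ) + (B.countBefore a (B.val a) : ℤ)

/-- `f_B(a) = |a|' + c(a) - r(a)`. -/
def fIdx (B : RevBarredSubTableau d μ) (a : ℕ × ℕ) : ℤ :=
  ((d : ℤ) + 1 - (B.val a : ℤ)) + (a.2 : ℤ) - (a.1 : ℤ)

/-- `c_{ξ,B}`. -/
def cXi (B : RevBarredSubTableau d μ) (ξ : Fin d → ℕ) : P d :=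
  ∏ a ∈ (cells d μ).filter (fun a => B.barred a), (yI d (B.eIdx ξ a) - yI d (B.fIdx a))

end RevBarredSubTableau

end EqLR

namespace EqLR

section Aux

variable {d : ℕ} {lam mu : Fin d → ℕ}

lemma mem_cells_iff {a : ℕ × ℕ} :
    a ∈ cells d mu ↔ ∃ h : a.1 < d, a.2 < mu ⟨a.1, h⟩ := by
  constructor
  · intro ha
    exact (Finset.mem_filter.mp ha).2
  · rintro ⟨hh, hc⟩
    refine Finset.mem_filter.mpr ⟨Finset.mem_product.mpr ⟨?_, ?_⟩, ⟨hh, hc⟩⟩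
    · exact Finset.mem_range.mpr hh
    · exact Finset.mem_range.mpr
        (lt_of_lt_of_le hc (le_trans (Finset.le_sup (Finset.mem_univ _)) (Nat.le_succ _)))

lemma cells_mono (hmu : IsPartitionVec mu)
    {r1 c1 r2 c2 : ℕ} (h : (r2, c2) ∈ cells d mu) (hr : r1 ≤ r2) (hc : c1 ≤ c2) :
    (r1, c1) ∈ cells d mu := by
  obtain ⟨hd2, hcc⟩ := mem_cells_iff.mp h
  have h1 : r1 < d := lt_of_le_of_lt hr hd2
  exact mem_cells_iff.mpr
    ⟨h1, lt_of_le_of_lt hc (lt_of_lt_of_le hcc (hmu ⟨r1, h1⟩ ⟨r2, hd2⟩ hr))⟩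

lemma bot_col_lt (hmu : IsPartitionVec mu) (L : SkewBarredTableau d lam mu)
    {r1 r2 c : ℕ} (hr : r1 < r2) (h : (r2, c) ∈ cells d mu) :
    L.bot (r2, c) < L.bot (r1, c) := by
  induction r2 with
  | zero => omega
  | succ n ih =>
    rcases Nat.lt_succ_iff_lt_or_eq.mp hr with h' | h'
    · have hn : (n, c) ∈ cells d mu := cells_mono hmu h (Nat.le_succ n) le_rfl
      exact lt_trans (L.bot_col n c h) (ih h' hn)
    · subst h'; exact L.bot_col r1 c h

/-- Position of a cell in the reverse reading order. -/
def posOf (d : ℕ) (a : ℕ × ℕ) : ℕ := a.2 * d + (d - 1 - a.1)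

lemma revBefore_trichotomy (a b : ℕ × ℕ) : revBefore a b ∨ a = b ∨ revBefore b a := by
  rcases a with ⟨a1, a2⟩; rcases b with ⟨b1, b2⟩
  simp only [revBefore, Prod.mk.injEq]
  omega

lemma revBefore_trans {a b c : ℕ × ℕ} (h1 : revBefore a b) (h2 : revBefore b c) :
    revBefore a c := by
  unfold revBefore at *; omega

lemma revBefore_irrefl (a : ℕ × ℕ) : ¬ revBefore a a := by
  unfold revBefore; omega

lemma pos_lt_of_revBefore {a b : ℕ × ℕ} (hb : b.1 < d) (h : revBefore a b) :
    posOf d b < posOf d a := by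
  unfold revBefore at h
  unfold posOf
  rcases h with h | ⟨h1, h2⟩
  · have hmul : b.2 * d + d ≤ a.2 * d := by
      calc b.2 * d + d = (b.2 + 1) * d := by ring
        _ ≤ a.2 * d := Nat.mul_le_mul_right d h
    omega
  · rw [h1]; omega

lemma countUpTo_eq_countBefore_add (L : SkewBarredTableau d lam mu)
    {a : ℕ × ℕ} (ha : a ∈ cells d mu) (j : ℕ) :
    L.countUpTo a j = L.countBefore a j +
      (if ¬ L.barred a ∧ L.bot a = j then 1 else 0) := by
  unfold SkewBarredTableau.countUpTo SkewBarredTableau.countBefore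
  rw [Nat.add_assoc]
  congr 1
  have hsplit : (cells d mu).filter
        (fun b => ¬ L.barred b ∧ L.bot b = j ∧ (revBefore a b ∨ b = a))
      = (cells d mu).filter (fun b =>
          (¬ L.barred b ∧ L.bot b = j ∧ revBefore a b) ∨
          (b = a ∧ (¬ L.barred a ∧ L.bot a = j))) := by
    apply Finset.filter_congr
    intro b _
    constructor
    · rintro ⟨h1, h2, h3 | h3⟩
      · exact Or.inl ⟨h1, h2, h3⟩
      · subst h3; exact Or.inr ⟨rfl, h1, h2⟩
    · rintro (⟨h1, h2, h3⟩ | ⟨h3, h1, h2⟩)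
      · exact ⟨h1, h2, Or.inl h3⟩
      · subst h3; exact ⟨h1, h2, Or.inr rfl⟩
  rw [hsplit, Finset.filter_or, Finset.card_union_of_disjoint]
  · congr 1
    by_cases hP : ¬ L.barred a ∧ L.bot a = j
    · rw [if_pos hP]
      have hone : (cells d mu).filter
          (fun b => b = a ∧ (¬ L.barred a ∧ L.bot a = j)) = {a} := by
        ext b
        simp only [Finset.mem_filter, Finset.mem_singleton]
        constructor
        · rintro ⟨_, hh, _⟩; exact hh
        · rintro rfl; exact ⟨ha, rfl, hP⟩
      rw [hone, Finset.card_singleton]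
    · rw [if_neg hP]
      have hzero : (cells d mu).filter
          (fun b => b = a ∧ (¬ L.barred a ∧ L.bot a = j)) = ∅ := by
        apply Finset.filter_false_of_mem
        rintro b _ ⟨_, hh⟩; exact hP hh
      rw [hzero, Finset.card_empty]
  · rw [Finset.disjoint_left]
    rintro b hb1 hb2
    obtain ⟨_, _, _, h3⟩ := Finset.mem_filter.mp hb1
    obtain ⟨_, rfl, _⟩ := Finset.mem_filter.mp hb2
    exact revBefore_irrefl _ h3

lemma lam_content_lattice (L : SkewBarredTableau d lam mu)
    (hY : L.Yamanouchi) {j : ℕ} (hj : 1 ≤ j) :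
    ((cells d lam).filter fun b => L.top b = j + 1).card ≤
    ((cells d lam).filter fun b => L.top b = j).card := by
  rcases Finset.eq_empty_or_nonempty (cells d lam) with he | hne
  · simp [he]
  · obtain ⟨a0, ha0⟩ := hne
    have hcol0 : (a0.1, 0) ∈ cells d lam := by
      obtain ⟨h1, h2⟩ := mem_cells_iff.mp ha0
      exact mem_cells_iff.mpr ⟨h1, by dsimp only; omega⟩
    have hTne : ((cells d lam).filter (fun b => b.2 = 0)).Nonempty :=
      ⟨(a0.1, 0), Finset.mem_filter.mpr ⟨hcol0, rfl⟩⟩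
    obtain ⟨p, hpT, hpmax⟩ := Finset.exists_max_image _ Prod.fst hTne
    obtain ⟨hpcells, hp0⟩ := Finset.mem_filter.mp hpT
    have hlast : ∀ b ∈ cells d lam, youngBefore p b ∨ b = p := by
      intro b hb
      rcases Nat.eq_zero_or_pos b.2 with h0 | h0
      · have hble := hpmax b (Finset.mem_filter.mpr ⟨hb, h0⟩)
        rcases lt_or_eq_of_le hble with hlt | heq
        · exact Or.inl (Or.inr ⟨by omega, hlt⟩)
        · exact Or.inr (Prod.ext_iff.mpr ⟨heq, by omega⟩)
      · exact Or.inl (Or.inl (by omega))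
    have hcount : ∀ m : ℕ,
        L.topCountUpTo p m = ((cells d lam).filter fun b => L.top b = m).card := by
      intro m
      unfold SkewBarredTableau.topCountUpTo
      apply congrArg Finset.card
      apply Finset.filter_congr
      intro b hb
      constructor
      · rintro ⟨hh, _⟩; exact hh
      · intro hh; exact ⟨hh, hlast b hb⟩
    rw [← hcount, ← hcount]
    exact hY.1 p hpcells j hj

lemma exists_pred (L : SkewBarredTableau d lam mu) {a : ℕ × ℕ}
    (hS : ((cells d mu).filter (fun b => revBefore a b)).Nonempty) :
    ∃ p ∈ cells d mu, revBefore a p ∧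
      ∀ b ∈ cells d mu, (revBefore a b ↔ (revBefore p b ∨ b = p)) := by
  obtain ⟨p, hpS, hpmax⟩ := Finset.exists_max_image _ (posOf d) hS
  obtain ⟨hpc, hpa⟩ := Finset.mem_filter.mp hpS
  refine ⟨p, hpc, hpa, ?_⟩
  intro b hb
  have hpd : p.1 < d := (mem_cells_iff.mp hpc).1
  constructor
  · intro hab
    have hbS : b ∈ (cells d mu).filter (fun b => revBefore a b) :=
      Finset.mem_filter.mpr ⟨hb, hab⟩
    rcases revBefore_trichotomy p b with hh | hh | hh
    · exact Or.inl hh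
    · exact Or.inr hh.symm
    · exfalso
      have h1 := pos_lt_of_revBefore hpd hh
      have h2 := hpmax b hbS
      omega
  · rintro (hh | rfl)
    · exact revBefore_trans hpa hh
    · exact hpa

lemma countBefore_eq_of_pred (L : SkewBarredTableau d lam mu) {a p : ℕ × ℕ}
    (heq : ∀ b ∈ cells d mu, (revBefore a b ↔ (revBefore p b ∨ b = p))) (j : ℕ) :
    L.countBefore a j = L.countUpTo p j := by
  unfold SkewBarredTableau.countBefore SkewBarredTableau.countUpTo
  congr 1
  apply congrArg Finset.card
  apply Finset.filter_congr
  intro b hb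
  constructor
  · rintro ⟨h1, h2, h3⟩; exact ⟨h1, h2, (heq b hb).mp h3⟩
  · rintro ⟨h1, h2, h3⟩; exact ⟨h1, h2, (heq b hb).mpr h3⟩

lemma countBefore_eq_lam (L : SkewBarredTableau d lam mu) {a : ℕ × ℕ}
    (hS : (cells d mu).filter (fun b => revBefore a b) = ∅) (j : ℕ) :
    L.countBefore a j = ((cells d lam).filter fun b => L.top b = j).card := by
  unfold SkewBarredTableau.countBefore
  have hempty : (cells d mu).filter
      (fun b => ¬ L.barred b ∧ L.bot b = j ∧ revBefore a b) = ∅ := by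
    rw [Finset.eq_empty_iff_forall_notMem] at *
    intro b hb
    obtain ⟨h1, _, _, h3⟩ := Finset.mem_filter.mp hb
    exact hS b (Finset.mem_filter.mpr ⟨h1, h3⟩)
  rw [hempty]
  simp

lemma countUpTo_lattice (L : SkewBarredTableau d lam mu) (hY : L.Yamanouchi) :
    ∀ a ∈ cells d mu, ∀ j, 1 ≤ j → L.countUpTo a (j + 1) ≤ L.countUpTo a j := by
  suffices H : ∀ n, ∀ a, a ∈ cells d mu →
      ((cells d mu).filter (fun b => revBefore a b)).card = n →
      ∀ j, 1 ≤ j → L.countUpTo a (j + 1) ≤ L.countUpTo a j by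
    intro a ha j hj; exact H _ a ha rfl j hj
  intro n
  induction n using Nat.strong_induction_on with
  | _ n ih =>
    intro a ha hn j hj
    by_cases hb : L.barred a
    · rw [countUpTo_eq_countBefore_add L ha, countUpTo_eq_countBefore_add L ha]
      have hind : ∀ m, (if ¬ L.barred a ∧ L.bot a = m then 1 else 0) = 0 := by
        intro m; rw [if_neg]; rintro ⟨hh, _⟩; exact hh hb
      rw [hind, hind, Nat.add_zero, Nat.add_zero]
      rcases Finset.eq_empty_or_nonempty
          ((cells d mu).filter (fun b => revBefore a b)) with he | hne
      · rw [countBefore_eq_lam L he, countBefore_eq_lam L he]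
        exact lam_content_lattice L hY hj
      · obtain ⟨p, hpc, hpa, heq⟩ := exists_pred L hne
        rw [countBefore_eq_of_pred L heq, countBefore_eq_of_pred L heq]
        have hsub : (cells d mu).filter (fun b => revBefore p b) ⊆
            (cells d mu).filter (fun b => revBefore a b) := by
          intro b hb'
          obtain ⟨h1, h2⟩ := Finset.mem_filter.mp hb'
          exact Finset.mem_filter.mpr ⟨h1, revBefore_trans hpa h2⟩
        have hssub : (cells d mu).filter (fun b => revBefore p b) ⊂
            (cells d mu).filter (fun b => revBefore a b) := by
          rw [Finset.ssubset_iff_of_subset hsub]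
          refine ⟨p, Finset.mem_filter.mpr ⟨hpc, hpa⟩, ?_⟩
          intro hcon
          exact revBefore_irrefl p (Finset.mem_filter.mp hcon).2
        have hlt : ((cells d mu).filter (fun b => revBefore p b)).card < n := by
          rw [← hn]; exact Finset.card_lt_card hssub
        exact ih _ hlt p hpc rfl j hj
    · exact hY.2 a ha hb j hj

lemma countBefore_lattice (L : SkewBarredTableau d lam mu) (hY : L.Yamanouchi)
    {a : ℕ × ℕ} {j : ℕ} (hj : 1 ≤ j) :
    L.countBefore a (j + 1) ≤ L.countBefore a j := by
  rcases Finset.eq_empty_or_nonempty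
      ((cells d mu).filter (fun b => revBefore a b)) with he | hne
  · rw [countBefore_eq_lam L he, countBefore_eq_lam L he]
    exact lam_content_lattice L hY hj
  · obtain ⟨p, hpc, _, heq⟩ := exists_pred L hne
    rw [countBefore_eq_of_pred L heq, countBefore_eq_of_pred L heq]
    exact countUpTo_lattice L hY p hpc j hj

lemma countBefore_anti (L : SkewBarredTableau d lam mu) (hY : L.Yamanouchi)
    {a : ℕ × ℕ} {j k : ℕ} (hj : 1 ≤ j) (hjk : j ≤ k) :
    L.countBefore a k ≤ L.countBefore a j := by
  induction k, hjk using Nat.le_induction with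
  | base => exact le_rfl
  | succ k hk ih => exact le_trans (countBefore_lattice L hY (le_trans hj hk)) ih

lemma between_eq (hmu : IsPartitionVec mu) (L : SkewBarredTableau d lam mu)
    {r c : ℕ} (h : (r, c + 1) ∈ cells d mu) {j : ℕ}
    (hj1 : L.bot (r, c + 1) ≤ j) (hj2 : j ≤ L.bot (r, c)) :
    L.countUpTo (r, c) j = L.countBefore (r, c + 1) j := by
  have hrc : (r, c) ∈ cells d mu := cells_mono hmu h le_rfl (Nat.le_succ c)
  unfold SkewBarredTableau.countUpTo SkewBarredTableau.countBefore
  congr 1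
  apply congrArg Finset.card
  apply Finset.filter_congr
  intro b hb
  obtain ⟨b1, b2⟩ := b
  constructor
  · rintro ⟨h1, h2, h3⟩
    refine ⟨h1, h2, ?_⟩
    simp only [revBefore, Prod.mk.injEq] at h3 ⊢
    omega
  · rintro ⟨h1, h2, h3⟩
    refine ⟨h1, h2, ?_⟩
    simp only [revBefore, Prod.mk.injEq] at h3 ⊢
    rcases h3 with h3 | ⟨h3a, h3b⟩
    · rcases Nat.lt_succ_iff_lt_or_eq.mp h3 with hlt | heq2
      · exact Or.inl (Or.inl hlt)
      · subst heq2
        rcases lt_trichotomy b1 r with hr' | hr' | hr'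
        · exfalso
          have hbot := bot_col_lt hmu L hr' hrc
          omega
        · subst hr'; exact Or.inr ⟨rfl, rfl⟩
        · exact Or.inl (Or.inr ⟨rfl, hr'⟩)
    · exfalso
      subst h3a
      have hbot := bot_col_lt hmu L h3b hb
      omega

end Aux

/-- Moving one box to the left along a row of `μ`, `Δ` can decrease by
at most one; and if it decreases by exactly one, the left entry must be barred. -/
theorem delta_move_left (d : ℕ) (hd : 1 ≤ d)
    (lam mu nu : Fin d → ℕ)
    (hlam : IsPartitionVec lam) (hmu : IsPartitionVec mu) (hnu : IsPartitionVec nu)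
    (L : SkewBarredTableau d lam mu) (hL : L.IsLR nu)
    (r c : ℕ) (h : (r, c + 1) ∈ cells d mu) :
    L.Δ (r, c) - 1 ≤ L.Δ (r, c + 1) ∧
    (L.Δ (r, c + 1) = L.Δ (r, c) - 1 → L.barred (r, c + 1)) := by
  have hY := hL.1
  have hk1 : 1 ≤ L.bot (r, c + 1) := (L.bot_mem _ h).1
  have hkk : L.bot (r, c + 1) ≤ L.bot (r, c) := L.bot_row r c h
  have hE : L.countUpTo (r, c) (L.bot (r, c)) = L.countBefore (r, c + 1) (L.bot (r, c)) :=
    between_eq hmu L h hkk le_rfl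
  have hchain : L.countBefore (r, c + 1) (L.bot (r, c)) ≤
      L.countBefore (r, c + 1) (L.bot (r, c + 1)) :=
    countBefore_anti L hY hk1 hkk
  have hU' := countUpTo_eq_countBefore_add L h (L.bot (r, c + 1))
  by_cases hb : L.barred (r, c + 1)
  · refine ⟨?_, fun _ => hb⟩
    have h0 : (if ¬ L.barred (r, c + 1) ∧ L.bot (r, c + 1) = L.bot (r, c + 1)
        then 1 else 0) = 0 := by
      rw [if_neg]; rintro ⟨hh, _⟩; exact hh hb
    rw [h0, Nat.add_zero] at hU'
    have key : L.countUpTo (r, c) (L.bot (r, c)) ≤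
        L.countUpTo (r, c + 1) (L.bot (r, c + 1)) := by omega
    simp only [SkewBarredTableau.Δ]
    push_cast
    omega
  · have h1 : (if ¬ L.barred (r, c + 1) ∧ L.bot (r, c + 1) = L.bot (r, c + 1)
        then 1 else 0) = 1 := if_pos ⟨hb, rfl⟩
    rw [h1] at hU'
    have key : L.countUpTo (r, c) (L.bot (r, c)) <
        L.countUpTo (r, c + 1) (L.bot (r, c + 1)) := by omega
    constructor
    · simp only [SkewBarredTableau.Δ]
      push_cast
      omega
    · intro heq
      exfalso
      simp only [SkewBarredTableau.Δ] at heq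
      push_cast at heq
      omega

end EqLR
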